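/- Let G be a k-connected graph with vertex set V, let D ⊆ V be such that every vertex of V \ D has at least m ≥ k neighbors in D, and let OPT ⊆ V be a vertex set such that G[OPT] is k-connected and every vertex of V \ OPT has at least m neighbors in OPT. Then G[OPT ∪ D] is k-connected. -/

import Mathlib

open scoped Classical

noncomputable section

/-- A graph is `k`-connected if it has more than `k` vertices and remains connected
after deleting any fewer than `k` vertices. -/
def KConnected {V : Type*} [Fintype V] (k : ℕ) (G : SimpleGraph V) : Prop :=
  k < Fintype.card V ∧ ∀ S : Finset V, S.card < k → (G.induce {v : V | v ∉ S}).Connected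

section Aux

variable {V : Type*} [Fintype V]

/-- Ambient reformulation of `KConnected` of an induced subgraph on a finset. -/
def KC (k : ℕ) (G : SimpleGraph V) (A : Finset V) : Prop :=
  k < A.card ∧ ∀ S : Finset V, S.card < k → (G.induce ↑(A \ S)).Connected

/-- Nested induced subgraphs are isomorphic to a single induced subgraph. -/
def induceInduceIso (G : SimpleGraph V) (s : Set V) (t : Set s) :
    (G.induce s).induce t ≃g G.induce (Subtype.val '' t) where
  toFun := fun x => ⟨x.1.1, ⟨x.1, x.2, rfl⟩⟩
  invFun := fun y => ⟨⟨y.1, by obtain ⟨a, ha, e⟩ := y.2; exact e ▸ a.2⟩, by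
    obtain ⟨a, ha, e⟩ := y.2
    have : a = ⟨y.1, e ▸ a.2⟩ := Subtype.ext e
    exact this ▸ ha⟩
  left_inv := fun x => by ext; rfl
  right_inv := fun y => by ext; rfl
  map_rel_iff' := Iff.rfl

lemma isoConn {W W' : Type*} {G : SimpleGraph W} {H : SimpleGraph W'} (e : G ≃g H)
    (h : G.Connected) : H.Connected :=
  h.map e.toHom e.toEquiv.surjective

lemma kc_iff (k : ℕ) (G : SimpleGraph V) (A : Finset V) :
    KConnected k (G.induce ↑A) ↔ KC k G A := by
  have hcard : Fintype.card ↥(↑A : Set V) = A.card := Fintype.card_coe A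
  constructor
  · rintro ⟨h1, h2⟩
    refine ⟨hcard ▸ h1, fun S hS => ?_⟩
    set S' : Finset ↥(↑A : Set V) := Finset.univ.filter (fun x => x.1 ∈ S) with hS'
    have hcard' : S'.card < k := by
      have : S'.image Subtype.val ⊆ S := by
        intro x hx
        simp only [hS', Finset.mem_image, Finset.mem_filter] at hx
        obtain ⟨a, ⟨_, ha⟩, rfl⟩ := hx; exact ha
      calc S'.card = (S'.image Subtype.val).card :=
            (Finset.card_image_of_injective _ Subtype.val_injective).symm
        _ ≤ S.card := Finset.card_le_card this
        _ < k := hS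
    have hconn := h2 S' hcard'
    have hiso := induceInduceIso G (↑A) {v : ↥(↑A : Set V) | v ∉ S'}
    have hset : Subtype.val '' {v : ↥(↑A : Set V) | v ∉ S'} = ↑(A \ S) := by
      ext x
      simp only [Set.mem_image, Set.mem_setOf_eq, Finset.coe_sdiff, Set.mem_diff,
        Finset.mem_coe, hS', Finset.mem_filter, Finset.mem_univ, true_and]
      constructor
      · rintro ⟨a, ha, rfl⟩; exact ⟨a.2, ha⟩
      · rintro ⟨hx, hxs⟩; exact ⟨⟨x, hx⟩, hxs, rfl⟩
    rw [hset] at hiso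
    exact isoConn hiso hconn
  · rintro ⟨h1, h2⟩
    refine ⟨hcard ▸ h1, fun S' hS' => ?_⟩
    set S : Finset V := S'.image Subtype.val with hSdef
    have hScard : S.card < k := by
      rw [hSdef, Finset.card_image_of_injective _ Subtype.val_injective]; exact hS'
    have hconn := h2 S hScard
    have hiso := induceInduceIso G (↑A) {v : ↥(↑A : Set V) | v ∉ S'}
    have hset : Subtype.val '' {v : ↥(↑A : Set V) | v ∉ S'} = ↑(A \ S) := by
      ext x
      simp only [Set.mem_image, Set.mem_setOf_eq, Finset.coe_sdiff, Set.mem_diff,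
        Finset.mem_coe, hSdef, Finset.mem_image]
      constructor
      · rintro ⟨a, ha, rfl⟩
        refine ⟨a.2, ?_⟩
        rintro ⟨b, hb, hbe⟩
        have hba : b = a := Subtype.ext hbe
        exact ha (hba ▸ hb)
      · rintro ⟨hx, hxs⟩
        exact ⟨⟨x, hx⟩, fun h => hxs ⟨⟨x, hx⟩, h, rfl⟩, rfl⟩
    rw [hset] at hiso
    exact isoConn hiso.symm hconn

lemma connected_insert (G : SimpleGraph V) (B : Set V) (hB : (G.induce B).Connected)
    (v w : V) (hw : w ∈ B) (hadj : G.Adj v w) :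
    (G.induce (insert v B)).Connected := by
  have hsub : B ⊆ insert v B := Set.subset_insert v B
  let f : G.induce B →g G.induce (insert v B) :=
    ⟨fun x => ⟨x.1, hsub x.2⟩, fun h => h⟩
  have hwmem : (w : V) ∈ insert v B := hsub hw
  have key : ∀ x : ↥(insert v B), (G.induce (insert v B)).Reachable x ⟨w, hwmem⟩ := by
    intro x
    rcases x.2 with hx | hx
    · have hadj' : (G.induce (insert v B)).Adj x ⟨w, hwmem⟩ := by
        show G.Adj x.1 w
        rwa [hx]
      exact hadj'.reachable
    · have := (hB.preconnected ⟨x.1, hx⟩ ⟨w, hw⟩).map f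
      convert this using 2 <;> rfl
  haveI : Nonempty ↥(insert v B) := ⟨⟨w, hwmem⟩⟩
  exact SimpleGraph.Connected.mk (fun x y => (key x).trans (key y).symm)

lemma KC_insert {k : ℕ} (G : SimpleGraph V) (A : Finset V) (hA : KC k G A) (v : V)
    (N : Finset V) (hN : N ⊆ A) (hNadj : ∀ w ∈ N, G.Adj v w) (hNcard : k ≤ N.card) :
    KC k G (insert v A) := by
  refine ⟨lt_of_lt_of_le hA.1 (Finset.card_le_card (Finset.subset_insert v A)), ?_⟩
  intro S hS
  by_cases hv : v ∈ S
  · rw [Finset.insert_sdiff_of_mem _ hv]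
    exact hA.2 S hS
  · rw [Finset.insert_sdiff_of_notMem _ hv, Finset.coe_insert]
    have hNS : (N \ S).Nonempty := by
      rw [← Finset.card_pos]
      have h1 : N.card ≤ (N \ S).card + S.card := Finset.card_le_card_sdiff_add_card
      omega
    obtain ⟨w, hwmem⟩ := hNS
    have hwN : w ∈ N := (Finset.mem_sdiff.1 hwmem).1
    have hwS : w ∉ S := (Finset.mem_sdiff.1 hwmem).2
    have hwB : w ∈ (↑(A \ S) : Set V) := by
      simp only [Finset.coe_sdiff, Set.mem_diff, Finset.mem_coe]
      exact ⟨hN hwN, hwS⟩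
    exact connected_insert G _ (hA.2 S hS) v w hwB (hNadj w hwN)

end Aux

/-- If `G` is `k`-connected, every vertex outside `D` has at least `m ≥ k` neighbors
in `D`, `G[OPT]` is `k`-connected and every vertex outside `OPT` has at least `m`
neighbors in `OPT`, then `G[OPT ∪ D]` is `k`-connected. -/
theorem induce_union_kconnected {V : Type*} [Fintype V] (k m : ℕ) (hk : 0 < k)
    (hkm : k ≤ m) (G : SimpleGraph V) (hG : KConnected k G) (D OPT : Finset V)
    (hD : ∀ v ∉ D, m ≤ (D.filter (fun u => G.Adj v u)).card)
    (hOPTconn : KConnected k (G.induce ↑OPT))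
    (hOPTdom : ∀ v ∉ OPT, m ≤ (OPT.filter (fun u => G.Adj v u)).card) :
    KConnected k (G.induce ↑(OPT ∪ D)) := by
  rw [kc_iff]
  have key : ∀ E : Finset V, KC k G (OPT ∪ E) := by
    intro E
    induction E using Finset.induction_on with
    | empty => rw [Finset.union_empty]; exact (kc_iff k G OPT).1 hOPTconn
    | @insert a E ha ih =>
      rw [Finset.union_insert]
      by_cases hmem : a ∈ OPT ∪ E
      · rwa [Finset.insert_eq_self.2 hmem]
      · have haOPT : a ∉ OPT := fun h => hmem (Finset.mem_union_left _ h)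
        refine KC_insert G _ ih a (OPT.filter (fun u => G.Adj a u)) ?_ ?_ ?_
        · exact (Finset.filter_subset _ _).trans (Finset.subset_union_left)
        · intro w hw; exact (Finset.mem_filter.1 hw).2
        · exact le_trans hkm (hOPTdom a haOPT)
  exact key D
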